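/- Let u, v ∈ {1,2}^{ℤ_{>0}}. If d_L(X_u, X_v) < log 2, then u = v. -/

import Mathlib

open ENNReal

/-- The dilation (smallest Lipschitz constant) of a map between metric spaces. -/
noncomputable def dil {X : Type*} {Y : Type*} [MetricSpace X] [MetricSpace Y]
    (f : X → Y) : ℝ :=
  sInf {K : ℝ | ∀ x y : X, dist (f x) (f y) ≤ K * dist x y}

/-- A bijection is a bi-Lipschitz homeomorphism if it and its inverse are Lipschitz. -/
def IsBiLipschitzEquiv {X : Type*} {Y : Type*} [MetricSpace X] [MetricSpace Y]
    (f : X ≃ Y) : Prop :=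
  (∃ K : NNReal, LipschitzWith K f) ∧ (∃ K : NNReal, LipschitzWith K f.symm)

/-- The quantity `|log dil f| + |log dil f⁻¹|`. -/
noncomputable def lipCost {X : Type*} {Y : Type*} [MetricSpace X] [MetricSpace Y]
    (f : X ≃ Y) : ℝ :=
  |Real.log (dil (f : X → Y))| + |Real.log (dil (f.symm : Y → X))|

/-- The Lipschitz distance: the infimum of `|log dil f| + |log dil f⁻¹|` over all
bi-Lipschitz homeomorphisms `f : X → Y` (`∞` if none exists). -/
noncomputable def lipDist (X : Type*) (Y : Type*) [MetricSpace X] [MetricSpace Y] : ℝ≥0∞ :=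
  ⨅ (f : X ≃ Y) (_ : IsBiLipschitzEquiv f), ENNReal.ofReal (lipCost f)

/-- The interval `I(n,m) = [1/2^n, 1/2^n + 1/2^(n+m)]`. -/
def Iset (n m : ℕ) : Set ℝ := Set.Icc ((1:ℝ)/2^n) ((1:ℝ)/2^n + 1/2^(n+m))

/-- `X_u = {0} ∪ ⋃_{n ≥ 1} I(n, u_n)`, with the Euclidean metric inherited from `ℝ`. -/
def Xset (u : ℕ+ → ℕ) : Set ℝ := {0} ∪ ⋃ n : ℕ+, Iset (n : ℕ) (u n)

namespace XsetAux

lemma pow_div_mono (c : ℝ) (hc : 0 ≤ c) {a b : ℕ} (h : a ≤ b) :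
    c / 2 ^ b ≤ c / 2 ^ a :=
  div_le_div_of_nonneg_left hc (by positivity) (pow_le_pow_right₀ one_le_two h)

lemma half_step (a : ℕ) : (1:ℝ)/2^a = 2 * (1/2^(a+1)) := by
  rw [pow_succ]
  have h : (2:ℝ)^a ≠ 0 := by positivity
  field_simp

lemma zero_mem (u : ℕ+ → ℕ) : (0:ℝ) ∈ Xset u := Or.inl rfl

lemma Iset_subset (u : ℕ+ → ℕ) (n : ℕ+) : Iset (n:ℕ) (u n) ⊆ Xset u :=
  fun x hx => Or.inr (Set.mem_iUnion.2 ⟨n, hx⟩)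

lemma left_mem (u : ℕ+ → ℕ) (n : ℕ+) : (1:ℝ)/2^(n:ℕ) ∈ Iset (n:ℕ) (u n) :=
  ⟨le_refl _, le_add_of_nonneg_right (by positivity)⟩

lemma right_mem (u : ℕ+ → ℕ) (n : ℕ+) :
    (1:ℝ)/2^(n:ℕ) + 1/2^((n:ℕ) + u n) ∈ Iset (n:ℕ) (u n) :=
  ⟨le_add_of_nonneg_right (by positivity), le_refl _⟩

lemma mem_Xset_iff {u : ℕ+ → ℕ} {x : ℝ} (hx : x ∈ Xset u) :
    x = 0 ∨ ∃ n : ℕ+, x ∈ Iset (n:ℕ) (u n) := by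
  rcases hx with h | h
  · exact Or.inl h
  · exact Or.inr (Set.mem_iUnion.1 h)

lemma upper_bound {u : ℕ+ → ℕ} (hu : ∀ n, u n = 1 ∨ u n = 2) {n : ℕ+} {x : ℝ}
    (hx : x ∈ Iset (n:ℕ) (u n)) : x ≤ 3 / 2 ^ ((n:ℕ)+1) := by
  obtain ⟨h1, h2⟩ := hx
  have hun : 1 ≤ u n := by rcases hu n with h | h <;> omega
  have hle : (1:ℝ)/2^((n:ℕ) + u n) ≤ 1/2^((n:ℕ)+1) := pow_div_mono 1 one_pos.le (by omega)
  have e : (1:ℝ)/2^(n:ℕ) + 1/2^((n:ℕ)+1) = 3/2^((n:ℕ)+1) := by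
    rw [pow_succ]
    have h2n : (2:ℝ)^(n:ℕ) ≠ 0 := by positivity
    field_simp
    ring
  linarith

lemma gap_not_mem {u : ℕ+ → ℕ} (hu : ∀ n, u n = 1 ∨ u n = 2) (N : ℕ) :
    (7:ℝ) / 2 ^ (N+2) ∉ Xset u := by
  intro h
  rcases mem_Xset_iff h with h0 | ⟨k, hk⟩
  · have : (0:ℝ) < 7 / 2^(N+2) := by positivity
    rw [h0] at this; exact lt_irrefl _ this
  · have hup := upper_bound hu hk
    have hlo := hk.1
    have hpos : (0:ℝ) < 2^(N+2) := by positivity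
    rcases le_or_gt N (k:ℕ) with hle | hlt
    · have h1 : (3:ℝ)/2^((k:ℕ)+1) ≤ 3/2^(N+1) := pow_div_mono 3 (by norm_num) (by omega)
      have h2 : (3:ℝ)/2^(N+1) = 6/2^(N+2) := by
        rw [pow_succ]
        have : (2:ℝ)^(N+1) ≠ 0 := by positivity
        field_simp
        ring
      have h3 : (7:ℝ)/2^(N+2) ≤ 6/2^(N+2) := by
        calc (7:ℝ)/2^(N+2) ≤ 3/2^((k:ℕ)+1) := hup
          _ ≤ 3/2^(N+1) := h1
          _ = 6/2^(N+2) := h2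
      rw [div_le_div_iff_of_pos_right hpos] at h3
      linarith
    · have e : (8:ℝ)/2^((k:ℕ)+3) = 1/2^(k:ℕ) := by
        rw [pow_add]
        have : (2:ℝ)^(k:ℕ) ≠ 0 := by positivity
        field_simp
        ring
      have h1 : (8:ℝ)/2^(N+2) ≤ 8/2^((k:ℕ)+3) := pow_div_mono 8 (by norm_num) (by omega)
      have h3 : (8:ℝ)/2^(N+2) ≤ 7/2^(N+2) := by
        calc (8:ℝ)/2^(N+2) ≤ 8/2^((k:ℕ)+3) := h1
          _ = 1/2^(k:ℕ) := e
          _ ≤ 7/2^(N+2) := hlo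
      rw [div_le_div_iff_of_pos_right hpos] at h3
      linarith

lemma gap_lt_left (n : ℕ) : (7:ℝ)/2^(n+3) < 1/2^n := by
  have e : (8:ℝ)/2^(n+3) = 1/2^n := by
    rw [pow_add]
    have : (2:ℝ)^n ≠ 0 := by positivity
    field_simp
    ring
  rw [← e, div_lt_div_iff_of_pos_right (by positivity : (0:ℝ) < 2^(n+3))]
  norm_num

lemma top_lt_gap {u : ℕ+ → ℕ} (hu : ∀ n, u n = 1 ∨ u n = 2) {k : ℕ+} {n : ℕ} {y : ℝ}
    (hk : y ∈ Iset (k:ℕ) (u k)) (hnk : n < (k:ℕ)) : y < (7:ℝ)/2^(n+3) := by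
  have hup := upper_bound hu hk
  have h1 : (3:ℝ)/2^((k:ℕ)+1) ≤ 3/2^(n+2) := pow_div_mono 3 (by norm_num) (by omega)
  have h2 : (3:ℝ)/2^(n+2) = 6/2^(n+3) := by
    rw [show n+3 = (n+2)+1 from rfl, pow_succ]
    have : (2:ℝ)^(n+2) ≠ 0 := by positivity
    field_simp
    ring
  have h3 : (6:ℝ)/2^(n+3) < 7/2^(n+3) := by
    rw [div_lt_div_iff_of_pos_right (by positivity : (0:ℝ) < 2^(n+3))]
    norm_num
  calc y ≤ 3/2^((k:ℕ)+1) := hup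
    _ ≤ 3/2^(n+2) := h1
    _ = 6/2^(n+3) := h2
    _ < 7/2^(n+3) := h3

/-- A preconnected subset of `Xset u` meeting the `n`-th block is contained in it. -/
lemma not_far {u : ℕ+ → ℕ} (hu : ∀ n, u n = 1 ∨ u n = 2) {S : Set ℝ}
    (hS : IsPreconnected S) (hSX : S ⊆ Xset u) {n : ℕ+} {x : ℝ}
    (hx : x ∈ S) (hxn : x ∈ Iset (n:ℕ) (u n)) : S ⊆ Iset (n:ℕ) (u n) := by
  have hoc : S.OrdConnected := hS.ordConnected
  intro y hy
  rcases mem_Xset_iff (hSX hy) with h0 | ⟨k, hk⟩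
  · exfalso
    subst h0
    have hg : (7:ℝ)/2^((n:ℕ)+3) ∈ Set.Icc (0:ℝ) x := by
      constructor
      · positivity
      · exact le_of_lt (lt_of_lt_of_le (gap_lt_left (n:ℕ)) hxn.1)
    exact gap_not_mem hu ((n:ℕ)+1) (hSX (hoc.out hy hx (by simpa using hg)))
  · rcases lt_trichotomy (k:ℕ) (n:ℕ) with hlt | heq | hgt
    · exfalso
      -- gap at index n sits between x's block and y's block: use gap 7/2^(n+3)?? no.
      -- x ∈ block n (small), y ∈ block k with k < n (large). gap g = 7/2^(k+3) between them:
      -- x ≤ top of block n < g (since n > k) and g < 1/2^k ≤ y.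
      have hxg : x < (7:ℝ)/2^((k:ℕ)+3) := top_lt_gap hu hxn hlt
      have hgy : (7:ℝ)/2^((k:ℕ)+3) < y := lt_of_lt_of_le (gap_lt_left (k:ℕ)) hk.1
      have hg : (7:ℝ)/2^((k:ℕ)+3) ∈ Set.Icc x y := ⟨le_of_lt hxg, le_of_lt hgy⟩
      exact gap_not_mem hu ((k:ℕ)+1) (hSX (hoc.out hx hy (by simpa using hg)))
    · have : k = n := PNat.coe_injective heq
      rwa [← this]
    · exfalso
      -- y ∈ block k with k > n (y small), x ∈ block n (large); gap 7/2^(n+3) between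
      have hyg : y < (7:ℝ)/2^((n:ℕ)+3) := top_lt_gap hu hk hgt
      have hgx : (7:ℝ)/2^((n:ℕ)+3) < x := lt_of_lt_of_le (gap_lt_left (n:ℕ)) hxn.1
      have hg : (7:ℝ)/2^((n:ℕ)+3) ∈ Set.Icc y x := ⟨le_of_lt hyg, le_of_lt hgx⟩
      exact gap_not_mem hu ((n:ℕ)+1) (hSX (hoc.out hy hx (by simpa using hg)))

/-- A preconnected subset of `Xset u` containing `0` is `{0}`. -/
lemma zero_comp {u : ℕ+ → ℕ} (hu : ∀ n, u n = 1 ∨ u n = 2) {S : Set ℝ}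
    (hS : IsPreconnected S) (hSX : S ⊆ Xset u) (h0 : (0:ℝ) ∈ S) : S ⊆ {0} := by
  have hoc : S.OrdConnected := hS.ordConnected
  intro y hy
  rcases mem_Xset_iff (hSX hy) with h | ⟨k, hk⟩
  · exact h
  · exfalso
    have hgy : (7:ℝ)/2^((k:ℕ)+3) < y := lt_of_lt_of_le (gap_lt_left (k:ℕ)) hk.1
    have hg : (7:ℝ)/2^((k:ℕ)+3) ∈ Set.Icc (0:ℝ) y := ⟨by positivity, le_of_lt hgy⟩
    exact gap_not_mem hu ((k:ℕ)+1) (hSX (hoc.out h0 hy (by simpa using hg)))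

lemma block_disj {u : ℕ+ → ℕ} (hu : ∀ n, u n = 1 ∨ u n = 2) {k k' : ℕ+} {x : ℝ}
    (h : x ∈ Iset (k:ℕ) (u k)) (h' : x ∈ Iset (k':ℕ) (u k')) : k = k' := by
  by_contra hne
  rcases lt_or_gt_of_ne (fun hc : (k:ℕ) = (k':ℕ) => hne (PNat.coe_injective hc)) with hlt | hgt
  · have := top_lt_gap hu h' hlt
    have := lt_of_lt_of_le (gap_lt_left (k:ℕ)) h.1
    linarith
  · have := top_lt_gap hu h (hgt : (k':ℕ) < (k:ℕ))
    have := lt_of_lt_of_le (gap_lt_left (k':ℕ)) h'.1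
    linarith

/-- Image of a block under a continuous map of subtypes is preconnected (in ℝ). -/
lemma image_preconnected {u v : ℕ+ → ℕ} (g : ↥(Xset u) ≃ ↥(Xset v)) (hg : Continuous g)
    (T : Set ℝ) (hT : IsPreconnected T) (hTX : T ⊆ Xset u) :
    IsPreconnected ((Subtype.val : ↥(Xset v) → ℝ) ''
      ((g : ↥(Xset u) → ↥(Xset v)) '' ((Subtype.val : ↥(Xset u) → ℝ) ⁻¹' T))) := by
  have h1 : IsPreconnected ((Subtype.val : ↥(Xset u) → ℝ) ⁻¹' T) := by
    rw [← Topology.IsInducing.subtypeVal.isPreconnected_image]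
    rw [Subtype.image_preimage_coe]
    rwa [Set.inter_eq_self_of_subset_right hTX]
  exact ((h1.image _ hg.continuousOn).image _ continuous_subtype_val.continuousOn)

lemma maps_zero {u v : ℕ+ → ℕ} (hu : ∀ n, u n = 1 ∨ u n = 2)
    (g : ↥(Xset u) ≃ ↥(Xset v)) (hgs : Continuous (g.symm : ↥(Xset v) → ↥(Xset u))) :
    g ⟨0, zero_mem u⟩ = ⟨0, zero_mem v⟩ := by
  by_contra hne
  have hy : ((g ⟨0, zero_mem u⟩ : ↥(Xset v)) : ℝ) ≠ 0 := by
    intro hc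
    exact hne (Subtype.ext hc)
  rcases mem_Xset_iff (g ⟨0, zero_mem u⟩).2 with h0 | ⟨m, hm⟩
  · exact hy h0
  · -- consider the image of block m of v under g.symm
    set S := (Subtype.val : ↥(Xset u) → ℝ) ''
      ((g.symm : ↥(Xset v) → ↥(Xset u)) '' ((Subtype.val : ↥(Xset v) → ℝ) ⁻¹' Iset (m:ℕ) (v m)))
    have hSpc : IsPreconnected S :=
      image_preconnected g.symm hgs _ isPreconnected_Icc (Iset_subset v m)
    have hSX : S ⊆ Xset u := by
      rintro x ⟨p, _, rfl⟩; exact p.2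
    have h0S : (0:ℝ) ∈ S := by
      refine ⟨g.symm (g ⟨0, zero_mem u⟩), ⟨g ⟨0, zero_mem u⟩, hm, rfl⟩, ?_⟩
      rw [Equiv.symm_apply_apply]
    have hsub : S ⊆ {0} := zero_comp hu hSpc hSX h0S
    -- both endpoints of the block map into S, hence both map to ⟨0⟩, contradicting injectivity
    have hL : ((g.symm ⟨1/2^(m:ℕ), Iset_subset v m (left_mem v m)⟩ : ↥(Xset u)) : ℝ) ∈ S :=
      ⟨_, ⟨⟨1/2^(m:ℕ), Iset_subset v m (left_mem v m)⟩, left_mem v m, rfl⟩, rfl⟩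
    have hR : ((g.symm ⟨1/2^(m:ℕ) + 1/2^((m:ℕ) + v m), Iset_subset v m (right_mem v m)⟩ :
        ↥(Xset u)) : ℝ) ∈ S :=
      ⟨_, ⟨⟨1/2^(m:ℕ) + 1/2^((m:ℕ) + v m), Iset_subset v m (right_mem v m)⟩, right_mem v m, rfl⟩,
        rfl⟩
    have hL0 : g.symm ⟨1/2^(m:ℕ), Iset_subset v m (left_mem v m)⟩ =
        g.symm ⟨1/2^(m:ℕ) + 1/2^((m:ℕ) + v m), Iset_subset v m (right_mem v m)⟩ := by
      apply Subtype.ext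
      rw [show ((g.symm ⟨1/2^(m:ℕ), Iset_subset v m (left_mem v m)⟩ : ↥(Xset u)) : ℝ) = 0 from
        hsub hL]
      rw [show ((g.symm ⟨1/2^(m:ℕ) + 1/2^((m:ℕ) + v m),
        Iset_subset v m (right_mem v m)⟩ : ↥(Xset u)) : ℝ) = 0 from hsub hR]
    have := g.symm.injective hL0
    have hvals : (1:ℝ)/2^(m:ℕ) = 1/2^(m:ℕ) + 1/2^((m:ℕ) + v m) := congrArg Subtype.val this
    have : (0:ℝ) < 1/2^((m:ℕ) + v m) := by positivity
    linarith

lemma block_map {u v : ℕ+ → ℕ} (hu : ∀ n, u n = 1 ∨ u n = 2) (hv : ∀ n, v n = 1 ∨ v n = 2)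
    (g : ↥(Xset u) ≃ ↥(Xset v)) (hg : Continuous g)
    (hg0 : g ⟨0, zero_mem u⟩ = ⟨0, zero_mem v⟩) (n : ℕ+) :
    ∃ m : ℕ+, ∀ x : ↥(Xset u), (x:ℝ) ∈ Iset (n:ℕ) (u n) →
      ((g x : ↥(Xset v)) : ℝ) ∈ Iset (m:ℕ) (v m) := by
  set Ln : ↥(Xset u) := ⟨1/2^(n:ℕ), Iset_subset u n (left_mem u n)⟩
  have hq : ((g Ln : ↥(Xset v)) : ℝ) ≠ 0 := by
    intro hc
    have : g Ln = ⟨0, zero_mem v⟩ := Subtype.ext hc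
    rw [← hg0] at this
    have := g.injective this
    have hvals : (1:ℝ)/2^(n:ℕ) = 0 := congrArg Subtype.val this
    have : (0:ℝ) < 1/2^(n:ℕ) := by positivity
    linarith
  rcases mem_Xset_iff (g Ln).2 with h0 | ⟨m, hm⟩
  · exact absurd h0 hq
  · refine ⟨m, fun x hx => ?_⟩
    set S := (Subtype.val : ↥(Xset v) → ℝ) ''
      ((g : ↥(Xset u) → ↥(Xset v)) '' ((Subtype.val : ↥(Xset u) → ℝ) ⁻¹' Iset (n:ℕ) (u n)))
    have hSpc : IsPreconnected S :=
      image_preconnected g hg _ isPreconnected_Icc (Iset_subset u n)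
    have hSX : S ⊆ Xset v := by rintro y ⟨p, _, rfl⟩; exact p.2
    have hqS : ((g Ln : ↥(Xset v)) : ℝ) ∈ S := ⟨g Ln, ⟨Ln, left_mem u n, rfl⟩, rfl⟩
    have hsub : S ⊆ Iset (m:ℕ) (v m) := not_far hv hSpc hSX hqS hm
    exact hsub ⟨g x, ⟨x, hx, rfl⟩, rfl⟩

lemma two_le_dil {X Y : Type*} [MetricSpace X] [MetricSpace Y] (g : X ≃ Y)
    (hK : ∃ K : NNReal, LipschitzWith K (g : X → Y)) {a b : X} (hab : a ≠ b)
    (h2 : 2 * dist a b ≤ dist (g a) (g b)) : 2 ≤ dil (g : X → Y) := by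
  obtain ⟨K, hK⟩ := hK
  refine le_csInf ⟨(K:ℝ), fun x y => hK.dist_le_mul x y⟩ ?_
  intro c hc
  have hd : 0 < dist a b := dist_pos.2 hab
  have h3 := hc a b
  nlinarith

lemma log_two_le_lipCost {X Y : Type*} [MetricSpace X] [MetricSpace Y] (f : X ≃ Y)
    (h : 2 ≤ dil (f : X → Y) ∨ 2 ≤ dil (f.symm : Y → X)) :
    Real.log 2 ≤ lipCost f := by
  unfold lipCost
  rcases h with h | h
  · have h1 : Real.log 2 ≤ Real.log (dil (f : X → Y)) := Real.log_le_log two_pos h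
    have h2 := le_abs_self (Real.log (dil (f : X → Y)))
    have h3 := abs_nonneg (Real.log (dil (f.symm : Y → X)))
    linarith
  · have h1 : Real.log 2 ≤ Real.log (dil (f.symm : Y → X)) := Real.log_le_log two_pos h
    have h2 := le_abs_self (Real.log (dil (f.symm : Y → X)))
    have h3 := abs_nonneg (Real.log (dil (f : X → Y)))
    linarith

lemma exists_equiv {X Y : Type*} [MetricSpace X] [MetricSpace Y]
    (hlt : lipDist X Y < ENNReal.ofReal (Real.log 2)) :
    ∃ f : X ≃ Y, IsBiLipschitzEquiv f ∧ lipCost f < Real.log 2 := by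
  unfold lipDist at hlt
  rw [iInf_lt_iff] at hlt
  obtain ⟨f, hf⟩ := hlt
  rw [iInf_lt_iff] at hf
  obtain ⟨hbi, hf⟩ := hf
  exact ⟨f, hbi, (ENNReal.ofReal_lt_ofReal_iff (Real.log_pos one_lt_two)).1 hf⟩

/-- Index monotonicity: the image block index can't be smaller. -/
lemma sigma_ge {u v : ℕ+ → ℕ}
    (g : ↥(Xset u) ≃ ↥(Xset v)) (hg0 : g ⟨0, zero_mem u⟩ = ⟨0, zero_mem v⟩)
    (hK : ∃ K : NNReal, LipschitzWith K (g : ↥(Xset u) → ↥(Xset v)))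
    (hdil : ¬ (2 ≤ dil (g : ↥(Xset u) → ↥(Xset v))))
    {n m : ℕ+}
    (hmap : ((g ⟨1/2^(n:ℕ), Iset_subset u n (left_mem u n)⟩ : ↥(Xset v)) : ℝ) ∈
      Iset (m:ℕ) (v m)) : (n:ℕ) ≤ (m:ℕ) := by
  by_contra hc
  push_neg at hc
  apply hdil
  set Ln : ↥(Xset u) := ⟨1/2^(n:ℕ), Iset_subset u n (left_mem u n)⟩
  have hab : (⟨0, zero_mem u⟩ : ↥(Xset u)) ≠ Ln := by
    intro hh
    have : (0:ℝ) = 1/2^(n:ℕ) := congrArg Subtype.val hh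
    have hp : (0:ℝ) < 1/2^(n:ℕ) := by positivity
    linarith
  refine two_le_dil g hK hab ?_
  have hd1 : dist (⟨0, zero_mem u⟩ : ↥(Xset u)) Ln = 1/2^(n:ℕ) := by
    rw [Subtype.dist_eq, Real.dist_eq]
    show |0 - (1:ℝ)/2^(n:ℕ)| = 1/2^(n:ℕ)
    rw [zero_sub, abs_neg, abs_of_nonneg (by positivity : (0:ℝ) ≤ 1/2^(n:ℕ))]
  have hd2 : (1:ℝ)/2^(m:ℕ) ≤ dist (g ⟨0, zero_mem u⟩) (g Ln) := by
    rw [hg0, Subtype.dist_eq, Real.dist_eq]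
    have hge : (1:ℝ)/2^(m:ℕ) ≤ ((g Ln : ↥(Xset v)) : ℝ) := hmap.1
    have hge0 : (0:ℝ) ≤ ((g Ln : ↥(Xset v)) : ℝ) :=
      le_trans (by positivity) hge
    show (1:ℝ)/2^(m:ℕ) ≤ |0 - ((g Ln : ↥(Xset v)) : ℝ)|
    rw [zero_sub, abs_neg, abs_of_nonneg hge0]
    exact hge
  have h1 : (2:ℝ)/2^(n:ℕ) ≤ 2/2^((m:ℕ)+1) := pow_div_mono 2 (by norm_num) (by omega)
  have h2 : (2:ℝ)/2^((m:ℕ)+1) = 1/2^(m:ℕ) := by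
    rw [pow_succ]
    have : (2:ℝ)^(m:ℕ) ≠ 0 := by positivity
    field_simp
  rw [hd1]
  calc 2 * ((1:ℝ)/2^(n:ℕ)) = 2/2^(n:ℕ) := by ring
    _ ≤ 2/2^((m:ℕ)+1) := h1
    _ = 1/2^(m:ℕ) := h2
    _ ≤ dist (g ⟨0, zero_mem u⟩) (g Ln) := hd2

end XsetAux

open XsetAux in
/-- If `d_L(X_u, X_v) < log 2` then `u = v`. -/
theorem Xset_discrete (u v : ℕ+ → ℕ) (hu : ∀ n, u n = 1 ∨ u n = 2)
    (hv : ∀ n, v n = 1 ∨ v n = 2)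
    (h : lipDist ↥(Xset u) ↥(Xset v) < ENNReal.ofReal (Real.log 2)) :
    u = v := by
  obtain ⟨f, ⟨hKf, hKfs⟩, hcost⟩ := exists_equiv h
  have hgc : Continuous (f : ↥(Xset u) → ↥(Xset v)) := hKf.choose_spec.continuous
  have hgc' : Continuous (f.symm : ↥(Xset v) → ↥(Xset u)) := hKfs.choose_spec.continuous
  have h0 : f ⟨0, zero_mem u⟩ = ⟨0, zero_mem v⟩ := maps_zero hu f hgc'
  have h0' : f.symm ⟨0, zero_mem v⟩ = ⟨0, zero_mem u⟩ := by
    rw [← h0, Equiv.symm_apply_apply]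
  choose σ hσ using block_map hu hv f hgc h0
  choose τ hτ using block_map hv hu f.symm hgc' h0'
  have hnot : ¬ (2 ≤ dil (f : ↥(Xset u) → ↥(Xset v))) := by
    intro hh
    exact absurd hcost (not_lt.2 (log_two_le_lipCost f (Or.inl hh)))
  have hnot' : ¬ (2 ≤ dil (f.symm : ↥(Xset v) → ↥(Xset u))) := by
    intro hh
    exact absurd hcost (not_lt.2 (log_two_le_lipCost f (Or.inr hh)))
  -- σ n = n for all n
  have hσ_id : ∀ n : ℕ+, σ n = n := by
    intro n
    have hmapn : ((f ⟨1/2^(n:ℕ), Iset_subset u n (left_mem u n)⟩ : ↥(Xset v)) : ℝ) ∈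
        Iset ((σ n : ℕ)) (v (σ n)) := hσ n _ (left_mem u n)
    have hle : (n:ℕ) ≤ (σ n : ℕ) := sigma_ge f h0 hKf hnot hmapn
    -- τ (σ n) = n
    have hmapback : ((f.symm (f ⟨1/2^(n:ℕ), Iset_subset u n (left_mem u n)⟩) : ↥(Xset u)) : ℝ) ∈
        Iset ((τ (σ n) : ℕ)) (u (τ (σ n))) := hτ (σ n) _ hmapn
    rw [Equiv.symm_apply_apply] at hmapback
    have hτσ : τ (σ n) = n := block_disj hu hmapback (left_mem u n)
    have hmaps : ((f.symm ⟨1/2^((σ n : ℕ)), Iset_subset v (σ n) (left_mem v (σ n))⟩ :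
        ↥(Xset u)) : ℝ) ∈ Iset ((τ (σ n) : ℕ)) (u (τ (σ n))) := hτ (σ n) _ (left_mem v (σ n))
    have hle' : ((σ n : ℕ)) ≤ ((τ (σ n)) : ℕ) := sigma_ge f.symm h0' hKfs hnot' hmaps
    rw [hτσ] at hle'
    exact PNat.coe_injective (le_antisymm hle' hle)
  have hτ_id : ∀ n : ℕ+, τ n = n := by
    intro n
    have hmaps : ((f.symm ⟨1/2^(n:ℕ), Iset_subset v n (left_mem v n)⟩ : ↥(Xset u)) : ℝ) ∈
        Iset ((τ n : ℕ)) (u (τ n)) := hτ n _ (left_mem v n)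
    have hle : (n:ℕ) ≤ (τ n : ℕ) := sigma_ge f.symm h0' hKfs hnot' hmaps
    have hmapback : ((f (f.symm ⟨1/2^(n:ℕ), Iset_subset v n (left_mem v n)⟩) : ↥(Xset v)) : ℝ) ∈
        Iset ((σ (τ n) : ℕ)) (v (σ (τ n))) := hσ (τ n) _ hmaps
    rw [Equiv.apply_symm_apply] at hmapback
    have hστ : σ (τ n) = n := block_disj hv hmapback (left_mem v n)
    have hmapn : ((f ⟨1/2^((τ n : ℕ)), Iset_subset u (τ n) (left_mem u (τ n))⟩ :
        ↥(Xset v)) : ℝ) ∈ Iset ((σ (τ n) : ℕ)) (v (σ (τ n))) := hσ (τ n) _ (left_mem u (τ n))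
    have hle' : ((τ n : ℕ)) ≤ ((σ (τ n)) : ℕ) := sigma_ge f h0 hKf hnot hmapn
    rw [hστ] at hle'
    exact PNat.coe_injective (le_antisymm hle' hle)
  -- now show u n = v n for each n
  funext n
  by_contra hne
  rcases hu n with hu1 | hu2
  · -- u n = 1, then v n = 2
    have hv2 : v n = 2 := by rcases hv n with h' | h' <;> omega
    -- endpoints of block n of u
    set x₁ : ↥(Xset u) := ⟨1/2^(n:ℕ), Iset_subset u n (left_mem u n)⟩
    set x₂ : ↥(Xset u) := ⟨1/2^(n:ℕ) + 1/2^((n:ℕ) + u n), Iset_subset u n (right_mem u n)⟩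
    have hfx₁ : ((f x₁ : ↥(Xset v)) : ℝ) ∈ Iset (n:ℕ) (v n) := by
      have := hσ n x₁ (left_mem u n)
      rwa [hσ_id n] at this
    have hfx₂ : ((f x₂ : ↥(Xset v)) : ℝ) ∈ Iset (n:ℕ) (v n) := by
      have := hσ n x₂ (right_mem u n)
      rwa [hσ_id n] at this
    have hdist_f : dist (f x₁) (f x₂) ≤ 1/2^((n:ℕ) + v n) := by
      rw [Subtype.dist_eq, Real.dist_eq, abs_sub_le_iff]
      constructor <;> [skip; skip] <;>
        · obtain ⟨a1, b1⟩ := hfx₁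
          obtain ⟨a2, b2⟩ := hfx₂
          linarith
    have hdist_x : dist x₁ x₂ = 1/2^((n:ℕ) + u n) := by
      rw [Subtype.dist_eq, Real.dist_eq]
      have e : ((x₁:ℝ)) - ((x₂:ℝ)) = -(1/2^((n:ℕ) + u n)) := by
        simp only [x₁, x₂]
        ring
      rw [e, abs_neg, abs_of_nonneg (by positivity : (0:ℝ) ≤ 1/2^((n:ℕ) + u n))]
    have hne12 : f x₁ ≠ f x₂ := by
      intro hh
      have := f.injective hh
      have hvals : (1:ℝ)/2^(n:ℕ) = 1/2^(n:ℕ) + 1/2^((n:ℕ) + u n) := congrArg Subtype.val this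
      have : (0:ℝ) < 1/2^((n:ℕ) + u n) := by positivity
      linarith
    apply hnot'
    refine two_le_dil f.symm hKfs hne12 ?_
    rw [Equiv.symm_apply_apply, Equiv.symm_apply_apply, hdist_x]
    have e : (1:ℝ)/2^((n:ℕ) + u n) = 2 * (1/2^((n:ℕ) + v n)) := by
      rw [hu1, hv2]
      exact half_step ((n:ℕ)+1)
    rw [e]
    have := hdist_f
    nlinarith [dist_nonneg (x := f x₁) (y := f x₂)]
  · -- u n = 2, then v n = 1
    have hv1 : v n = 1 := by rcases hv n with h' | h' <;> omega
    set y₁ : ↥(Xset v) := ⟨1/2^(n:ℕ), Iset_subset v n (left_mem v n)⟩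
    set y₂ : ↥(Xset v) := ⟨1/2^(n:ℕ) + 1/2^((n:ℕ) + v n), Iset_subset v n (right_mem v n)⟩
    have hfy₁ : ((f.symm y₁ : ↥(Xset u)) : ℝ) ∈ Iset (n:ℕ) (u n) := by
      have := hτ n y₁ (left_mem v n)
      rwa [hτ_id n] at this
    have hfy₂ : ((f.symm y₂ : ↥(Xset u)) : ℝ) ∈ Iset (n:ℕ) (u n) := by
      have := hτ n y₂ (right_mem v n)
      rwa [hτ_id n] at this
    have hdist_f : dist (f.symm y₁) (f.symm y₂) ≤ 1/2^((n:ℕ) + u n) := by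
      rw [Subtype.dist_eq, Real.dist_eq, abs_sub_le_iff]
      constructor <;> [skip; skip] <;>
        · obtain ⟨a1, b1⟩ := hfy₁
          obtain ⟨a2, b2⟩ := hfy₂
          linarith
    have hdist_y : dist y₁ y₂ = 1/2^((n:ℕ) + v n) := by
      rw [Subtype.dist_eq, Real.dist_eq]
      have e : ((y₁:ℝ)) - ((y₂:ℝ)) = -(1/2^((n:ℕ) + v n)) := by
        simp only [y₁, y₂]
        ring
      rw [e, abs_neg, abs_of_nonneg (by positivity : (0:ℝ) ≤ 1/2^((n:ℕ) + v n))]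
    have hne12 : f.symm y₁ ≠ f.symm y₂ := by
      intro hh
      have := f.symm.injective hh
      have hvals : (1:ℝ)/2^(n:ℕ) = 1/2^(n:ℕ) + 1/2^((n:ℕ) + v n) := congrArg Subtype.val this
      have : (0:ℝ) < 1/2^((n:ℕ) + v n) := by positivity
      linarith
    apply hnot
    refine two_le_dil f hKf hne12 ?_
    rw [Equiv.apply_symm_apply, Equiv.apply_symm_apply, hdist_y]
    have e : (1:ℝ)/2^((n:ℕ) + v n) = 2 * (1/2^((n:ℕ) + u n)) := by
      rw [hu2, hv1]
      exact half_step ((n:ℕ)+1)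
    rw [e]
    have := hdist_f
    nlinarith [dist_nonneg (x := f.symm y₁) (y := f.symm y₂)]
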